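/- Let f : ℝᵈ/ℤᵈ → ℝ be a periodic function with absolutely summable Fourier coefficients, let x̂ be any point of the torus, and let g₀ be any nonnegative periodic function with absolutely summable Fourier coefficients. If f⋆ denotes the minimum of f over the torus, then |f(x̂) − f⋆| ≤ ‖f − f(x̂) − g₀‖_F, where ‖u‖_F = Σ_{ω ∈ ℤᵈ} |û_ω| is the ℓ¹ norm of Fourier coefficients. -/

import Mathlib

open scoped BigOperators

/-- certificate theorem: for a periodic `f` with absolutely summable Fourier
coefficients, any point `xhat`, and any nonnegative periodic `g₀` with absolutely summable
Fourier coefficients, `|f(xhat) - f⋆| ≤ ‖f - f(xhat) - g₀‖_F`. -/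
theorem stmt0 {d : ℕ} (f : (Fin d → ℝ) → ℝ) (fc : (Fin d → ℤ) → ℂ)
    (hf : ∀ x, (f x : ℂ) = ∑' ω : Fin d → ℤ, fc ω *
      Complex.exp (2 * Real.pi * Complex.I * ∑ i, (ω i : ℂ) * (x i : ℂ)))
    (hfsum : Summable fun ω => ‖fc ω‖)
    (g₀ : (Fin d → ℝ) → ℝ) (gc : (Fin d → ℤ) → ℂ)
    (hg : ∀ x, (g₀ x : ℂ) = ∑' ω : Fin d → ℤ, gc ω *
      Complex.exp (2 * Real.pi * Complex.I * ∑ i, (ω i : ℂ) * (x i : ℂ)))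
    (hgsum : Summable fun ω => ‖gc ω‖)
    (hgnonneg : ∀ x, 0 ≤ g₀ x)
    (xstar xhat : Fin d → ℝ) (hmin : ∀ x, f xstar ≤ f x) :
    |f xhat - f xstar| ≤
      ∑' ω : Fin d → ℤ, ‖fc ω - (if ω = 0 then (f xhat : ℂ) else 0) - gc ω‖ := by
  set E : (Fin d → ℤ) → (Fin d → ℝ) → ℂ := fun ω x =>
    Complex.exp (2 * Real.pi * Complex.I * ∑ i, (ω i : ℂ) * (x i : ℂ)) with hE
  set δ : (Fin d → ℤ) → ℂ := fun ω => if ω = 0 then (f xhat : ℂ) else 0 with hδ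
  have hEnorm : ∀ (ω : Fin d → ℤ) (x : Fin d → ℝ), ‖E ω x‖ = 1 := by
    intro ω x
    have h1 : (∑ i, (ω i : ℂ) * (x i : ℂ)) = ((∑ i, (ω i : ℝ) * x i : ℝ) : ℂ) := by
      push_cast; ring
    simp only [hE, h1]
    rw [Complex.norm_exp]
    have : (2 * (Real.pi : ℂ) * Complex.I * ((∑ i, (ω i : ℝ) * x i : ℝ) : ℂ)).re = 0 := by
      simp [Complex.mul_re, Complex.mul_im]
    rw [this, Real.exp_zero]
  have hδsum : Summable fun ω => ‖δ ω‖ := by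
    apply summable_of_ne_finset_zero (s := {0})
    intro ω hω
    simp only [Finset.mem_singleton] at hω
    simp [hδ, hω]
  have hδx : ∀ x, (f xhat : ℂ) = ∑' ω, δ ω * E ω x := by
    intro x
    rw [tsum_eq_single 0 (by intro ω hω; simp [hδ, hω])]
    simp [hδ, hE]
  have hfs : ∀ x, Summable fun ω => fc ω * E ω x := by
    intro x
    apply Summable.of_norm
    simpa [hEnorm] using hfsum
  have hgs : ∀ x, Summable fun ω => gc ω * E ω x := by
    intro x
    apply Summable.of_norm
    simpa [hEnorm] using hgsum
  have hδs : ∀ x, Summable fun ω => δ ω * E ω x := by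
    intro x
    apply Summable.of_norm
    simpa [hEnorm] using hδsum
  have key : ∀ x : Fin d → ℝ, ‖(f x : ℂ) - f xhat - g₀ x‖ ≤
      ∑' ω, ‖fc ω - δ ω - gc ω‖ := by
    intro x
    have heq : (f x : ℂ) - f xhat - g₀ x = ∑' ω, (fc ω - δ ω - gc ω) * E ω x := by
      rw [hf x, hg x, hδx x]
      rw [← Summable.tsum_sub (hfs x) (hδs x), ← Summable.tsum_sub ((hfs x).sub (hδs x)) (hgs x)]
      congr 1; ext ω; ring
    have hnsum : Summable fun ω => ‖fc ω - δ ω - gc ω‖ := by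
      apply Summable.of_nonneg_of_le (fun ω => norm_nonneg _) _ ((hfsum.add hδsum).add hgsum)
      intro ω
      calc ‖fc ω - δ ω - gc ω‖ ≤ ‖fc ω - δ ω‖ + ‖gc ω‖ := norm_sub_le _ _
        _ ≤ ‖fc ω‖ + ‖δ ω‖ + ‖gc ω‖ := add_le_add_left (norm_sub_le _ _) _
    have hnsum2 : Summable fun ω => ‖(fc ω - δ ω - gc ω) * E ω x‖ := by
      simpa [hEnorm] using hnsum
    rw [heq]
    calc ‖∑' ω, (fc ω - δ ω - gc ω) * E ω x‖ ≤ ∑' ω, ‖(fc ω - δ ω - gc ω) * E ω x‖ :=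
          norm_tsum_le_tsum_norm hnsum2
      _ = ∑' ω, ‖fc ω - δ ω - gc ω‖ := by simp [hEnorm]
  have h1 := key xstar
  have h2 : ‖(f xstar : ℂ) - f xhat - g₀ xstar‖ = |f xstar - f xhat - g₀ xstar| := by
    have : (f xstar : ℂ) - f xhat - g₀ xstar = ((f xstar - f xhat - g₀ xstar : ℝ) : ℂ) := by
      push_cast; ring
    rw [this, Complex.norm_real, Real.norm_eq_abs]
  rw [h2] at h1
  have h3 : |f xhat - f xstar| = f xhat - f xstar := abs_of_nonneg (by linarith [hmin xhat])
  have h4 : f xhat - f xstar ≤ |f xstar - f xhat - g₀ xstar| := by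
    have := hgnonneg xstar
    have := neg_abs_le (f xstar - f xhat - g₀ xstar)
    linarith
  rw [h3]
  exact h4.trans h1
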